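/- A pointed regular category C is subtractive if and only if every square of type (1) in C is right saturated, i.e. the induced morphism c̄: Ker(g) → Ker(f) between the kernels (the unique morphism with ker(f)·c̄ = c·ker(g)) is a regular epimorphism. -/
import Mathlib


open CategoryTheory CategoryTheory.Limits

universe v u

namespace Paper

variable {𝒞 : Type u} [Category.{v} 𝒞]

/-- `f` is a regular epimorphism: it is a coequaliser of some pair of morphisms. -/
def IsRegEpi {X Y : 𝒞} (f : X ⟶ Y) : Prop :=
  ∃ (Z : 𝒞) (a b : Z ⟶ X), a ≫ f = b ≫ f ∧
    ∀ {T : 𝒞} (h : X ⟶ T), a ≫ h = b ≫ h → ∃! u : Y ⟶ T, f ≫ u = h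

/-- Regular epimorphisms are pullback-stable. -/
def RegEpisStable (𝒞 : Type u) [Category.{v} 𝒞] : Prop :=
  ∀ {P X Y Z : 𝒞} (p₁ : P ⟶ X) (p₂ : P ⟶ Y) (f : X ⟶ Z) (g : Y ⟶ Z),
    IsPullback p₁ p₂ f g → IsRegEpi g → IsRegEpi p₁

/-- Every kernel pair admits a coequaliser. -/
def KernelPairsHaveCoequalisers (𝒞 : Type u) [Category.{v} 𝒞] : Prop :=
  ∀ {R X Y : 𝒞} (f : X ⟶ Y) (a b : R ⟶ X), IsKernelPair f a b →
    ∃ (Q : 𝒞) (q : X ⟶ Q), a ≫ q = b ≫ q ∧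
      ∀ {T : 𝒞} (h : X ⟶ T), a ≫ h = b ≫ h → ∃! u : Q ⟶ T, q ≫ u = h

/-- A relation from `X` to `Y`: a jointly monomorphic span. -/
structure Rel (𝒞 : Type u) [Category.{v} 𝒞] (X Y : 𝒞) where
  R : 𝒞
  p1 : R ⟶ X
  p2 : R ⟶ Y
  jm : ∀ {Z : 𝒞} (a b : Z ⟶ R), a ≫ p1 = b ≫ p1 → a ≫ p2 = b ≫ p2 → a = b

variable {X Y Z : 𝒞}

/-- `ρ` is a subrelation of `σ`. -/
def Rel.le (ρ σ : Rel 𝒞 X Y) : Prop :=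
  ∃ j : ρ.R ⟶ σ.R, j ≫ σ.p1 = ρ.p1 ∧ j ≫ σ.p2 = ρ.p2

/-- `ρ` and `σ` are the same relation (isomorphic as subobjects of `X × Y`). -/
def Rel.equiv (ρ σ : Rel 𝒞 X Y) : Prop := ρ.le σ ∧ σ.le ρ

/-- The opposite relation. -/
def Rel.op (ρ : Rel 𝒞 X Y) : Rel 𝒞 Y X :=
  ⟨ρ.R, ρ.p2, ρ.p1, fun a b h2 h1 => ρ.jm a b h1 h2⟩

/-- A morphism viewed as a relation. -/
def homRel (f : X ⟶ Y) : Rel 𝒞 X Y :=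
  ⟨X, 𝟙 X, f, fun a b h _ => by simpa using h⟩

/-- The discrete (diagonal) relation on `X`. -/
def diagRel (X : 𝒞) : Rel 𝒞 X X := homRel (𝟙 X)

/-- The kernel pair `Eq(f)` of `f` as a relation on `X`. -/
noncomputable def kerPairRel [HasPullbacks 𝒞] (f : X ⟶ Y) : Rel 𝒞 X X :=
  ⟨pullback f f, pullback.fst f f, pullback.snd f f,
    fun a b h1 h2 => pullback.hom_ext h1 h2⟩

/-- `τ` is the composite `σρ` (first `ρ` from `X` to `Y`, then `σ` from `Y` to `Z`),
i.e. the (regular epi, jointly mono) factorisation of the span induced on the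
pullback of `ρ.p2` and `σ.p1`. -/
def IsRelComp [HasPullbacks 𝒞] (σ : Rel 𝒞 Y Z) (ρ : Rel 𝒞 X Y) (τ : Rel 𝒞 X Z) : Prop :=
  ∃ e : pullback ρ.p2 σ.p1 ⟶ τ.R, IsRegEpi e ∧
    e ≫ τ.p1 = pullback.fst ρ.p2 σ.p1 ≫ ρ.p1 ∧
    e ≫ τ.p2 = pullback.snd ρ.p2 σ.p1 ≫ σ.p2

def Rel.IsReflexive (ρ : Rel 𝒞 X X) : Prop :=
  ∃ r : X ⟶ ρ.R, r ≫ ρ.p1 = 𝟙 X ∧ r ≫ ρ.p2 = 𝟙 X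

def Rel.IsSymmetric (ρ : Rel 𝒞 X X) : Prop :=
  ∃ s : ρ.R ⟶ ρ.R, s ≫ ρ.p1 = ρ.p2 ∧ s ≫ ρ.p2 = ρ.p1

def Rel.IsTransitive [HasPullbacks 𝒞] (ρ : Rel 𝒞 X X) : Prop :=
  ∃ t : pullback ρ.p2 ρ.p1 ⟶ ρ.R,
    t ≫ ρ.p1 = pullback.fst ρ.p2 ρ.p1 ≫ ρ.p1 ∧
    t ≫ ρ.p2 = pullback.snd ρ.p2 ρ.p1 ≫ ρ.p2

def Rel.IsEquivalence [HasPullbacks 𝒞] (ρ : Rel 𝒞 X X) : Prop :=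
  ρ.IsReflexive ∧ ρ.IsSymmetric ∧ ρ.IsTransitive

/-- A finitely complete category is a Mal'tsev category when every reflexive
relation in it is an equivalence relation. -/
def IsMaltsev (𝒞 : Type u) [Category.{v} 𝒞] [HasPullbacks 𝒞] : Prop :=
  ∀ {X : 𝒞} (ρ : Rel 𝒞 X X), ρ.IsReflexive → ρ.IsEquivalence

/-- A square of type (1): split epimorphisms `f` (with section `s`) and `g`
(with section `t`), regular epimorphisms `c` and `d`, with `f·c = d·g` and
`s·d = c·t`. -/
structure IsSquare1 {A B E D : 𝒞} (f : A ⟶ B) (s : B ⟶ A) (g : E ⟶ D) (t : D ⟶ E)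
    (c : E ⟶ A) (d : D ⟶ B) : Prop where
  sec_f : s ≫ f = 𝟙 B
  sec_g : t ≫ g = 𝟙 D
  regepi_c : IsRegEpi c
  regepi_d : IsRegEpi d
  comm1 : c ≫ f = g ≫ d
  comm2 : d ≫ s = t ≫ c

/-- `N` is an ideal of morphisms. -/
def IsIdeal (N : MorphismProperty 𝒞) : Prop :=
  ∀ {X Y Z : 𝒞} (f : X ⟶ Y) (g : Y ⟶ Z), N f ∨ N g → N (f ≫ g)

/-- `n` is an `N`-kernel of `f`. -/
def IsNKernel (N : MorphismProperty 𝒞) {X Y K : 𝒞} (f : X ⟶ Y) (n : K ⟶ X) : Prop :=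
  N (n ≫ f) ∧ ∀ {Z : 𝒞} (m : Z ⟶ X), N (m ≫ f) → ∃! u : Z ⟶ K, u ≫ n = m

/-- Every morphism admits an `N`-kernel. -/
def HasNKernels (N : MorphismProperty 𝒞) : Prop :=
  ∀ {X Y : 𝒞} (f : X ⟶ Y), ∃ (K : 𝒞) (n : K ⟶ X), IsNKernel N f n

/-- `τ` is the largest star subrelation `ρ*` of the relation `ρ`. -/
def IsLargestStarSub (N : MorphismProperty 𝒞) (ρ τ : Rel 𝒞 X Y) : Prop :=
  τ.le ρ ∧ N τ.p1 ∧ ∀ σ : Rel 𝒞 X Y, σ.le ρ → N σ.p1 → σ.le τ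

/-- `(s1, s2)` is the star-kernel of `f`: the universal star coequalised by `f`. -/
def IsStarKernel (N : MorphismProperty 𝒞) {S X Y : 𝒞} (f : X ⟶ Y) (s1 s2 : S ⟶ X) : Prop :=
  N s1 ∧ s1 ≫ f = s2 ≫ f ∧
    ∀ {T : 𝒞} (t1 t2 : T ⟶ X), N t1 → t1 ≫ f = t2 ≫ f →
      ∃! u : T ⟶ S, u ≫ s1 = t1 ∧ u ≫ s2 = t2

/-- `(ν1, ν2)` is the star of the pullback relation of `(g, δ)`: the universal
pair with `ν1 ∈ N` and `δ·ν1 = g·ν2`. -/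
def IsStarPullbackRel (N : MorphismProperty 𝒞) {W E D P : 𝒞} (δ : W ⟶ D) (g : E ⟶ D)
    (ν1 : P ⟶ W) (ν2 : P ⟶ E) : Prop :=
  N ν1 ∧ ν1 ≫ δ = ν2 ≫ g ∧
    ∀ {T : 𝒞} (t1 : T ⟶ W) (t2 : T ⟶ E), N t1 → t1 ≫ δ = t2 ≫ g →
      ∃! u : T ⟶ P, u ≫ ν1 = t1 ∧ u ≫ ν2 = t2

/-- `f` is a coequaliser of `(s1, s2)`. -/
def IsCoeqOf {S X Y : 𝒞} (f : X ⟶ Y) (s1 s2 : S ⟶ X) : Prop :=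
  s1 ≫ f = s2 ≫ f ∧ ∀ {T : 𝒞} (h : X ⟶ T), s1 ≫ h = s2 ≫ h → ∃! u : Y ⟶ T, f ≫ u = h

/-- Star-regularity: every regular epimorphism is a coequaliser of a star. -/
def StarRegular (𝒞 : Type u) [Category.{v} 𝒞] (N : MorphismProperty 𝒞) : Prop :=
  ∀ {X Y : 𝒞} (f : X ⟶ Y), IsRegEpi f →
    ∃ (S : 𝒞) (s1 s2 : S ⟶ X), N s1 ∧ IsCoeqOf f s1 s2

/-- `f` is saturating: the induced morphism between the `N`-kernels of the
identities is a regular epimorphism. -/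
def Saturating (N : MorphismProperty 𝒞) {X Y : 𝒞} (f : X ⟶ Y) : Prop :=
  ∀ {KX KY : 𝒞} (nX : KX ⟶ X) (nY : KY ⟶ Y), IsNKernel N (𝟙 X) nX → IsNKernel N (𝟙 Y) nY →
    ∀ u : KX ⟶ KY, u ≫ nY = nX ≫ f → IsRegEpi u

/-- `X` is an `N`-trivial object. -/
def NTrivial (N : MorphismProperty 𝒞) (X : 𝒞) : Prop := N (𝟙 X)

/-- The multi-pointed category has enough trivial objects: `N` is a closed ideal and
`N`-trivial objects are closed under subobjects and squares. -/
def EnoughTrivialObjects [HasBinaryProducts 𝒞] (N : MorphismProperty 𝒞) : Prop :=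
  (∀ {X Y : 𝒞} (f : X ⟶ Y), N f → ∃ (T : 𝒞) (p : X ⟶ T) (q : T ⟶ Y),
      NTrivial N T ∧ p ≫ q = f) ∧
  (∀ {S X : 𝒞} (m : S ⟶ X), Mono m → NTrivial N X → NTrivial N S) ∧
  (∀ X : 𝒞, NTrivial N X → NTrivial N (X ⨯ X))

/-- A square of type (1) is a star-regular pushout when `(c g°)* = f° d*`. -/
def IsStarRegularPushout [HasPullbacks 𝒞] (N : MorphismProperty 𝒞) {A B E D : 𝒞}
    (f : A ⟶ B) (g : E ⟶ D) (c : E ⟶ A) (d : D ⟶ B) : Prop :=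
  ∀ (ρ τ μ : Rel 𝒞 D A) (ds : Rel 𝒞 D B),
    IsRelComp (homRel c) (Rel.op (homRel g)) ρ → IsLargestStarSub N ρ τ →
    IsLargestStarSub N (homRel d) ds → IsRelComp (Rel.op (homRel f)) ds μ →
    τ.equiv μ

/-- 2-star-permutability: `Eq(f) Eq(g)* = Eq(g) Eq(f)*` for all regular
epimorphisms `f`, `g` with the same domain. -/
def TwoStarPermutable (𝒞 : Type u) [Category.{v} 𝒞] [HasPullbacks 𝒞]
    (N : MorphismProperty 𝒞) : Prop :=
  ∀ {X Y Z : 𝒞} (f : X ⟶ Y) (g : X ⟶ Z), IsRegEpi f → IsRegEpi g →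
    ∀ (sf sg : Rel 𝒞 X X), IsLargestStarSub N (kerPairRel f) sf →
      IsLargestStarSub N (kerPairRel g) sg →
    ∀ (τ₁ τ₂ : Rel 𝒞 X X), IsRelComp (kerPairRel f) sg τ₁ →
      IsRelComp (kerPairRel g) sf τ₂ → τ₁.equiv τ₂

section Pointed

variable [HasZeroMorphisms 𝒞]

/-- `k` is a kernel of `f`. -/
def IsKernelOf {K X Y : 𝒞} (k : K ⟶ X) (f : X ⟶ Y) : Prop :=
  k ≫ f = 0 ∧ ∀ {Z : 𝒞} (m : Z ⟶ X), m ≫ f = 0 → ∃! u : Z ⟶ K, u ≫ k = m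

/-- `f` is a cokernel of `k`. -/
def IsCokernelOf {X Y K : 𝒞} (f : X ⟶ Y) (k : K ⟶ X) : Prop :=
  k ≫ f = 0 ∧ ∀ {T : 𝒞} (h : X ⟶ T), k ≫ h = 0 → ∃! u : Y ⟶ T, f ≫ u = h

/-- Short exact sequence `K → X ↠ Y`. -/
def IsShortExact {K X Y : 𝒞} (k : K ⟶ X) (f : X ⟶ Y) : Prop :=
  IsKernelOf k f ∧ IsCokernelOf f k

/-- Subtractivity: every reflexive, left punctual relation is right punctual. -/
def IsSubtractive (𝒞 : Type u) [Category.{v} 𝒞] [HasZeroMorphisms 𝒞] : Prop :=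
  ∀ {X : 𝒞} (ρ : Rel 𝒞 X X), ρ.IsReflexive →
    (∃ l : X ⟶ ρ.R, l ≫ ρ.p1 = 𝟙 X ∧ l ≫ ρ.p2 = 0) →
    (∃ r : X ⟶ ρ.R, r ≫ ρ.p1 = 0 ∧ r ≫ ρ.p2 = 𝟙 X)

end Pointed

theorem IsRegEpi.epi {X Y : 𝒞} {f : X ⟶ Y} (hf : IsRegEpi f) : Epi f := by
  obtain ⟨Z, a, b, hab, huniv⟩ := hf
  refine ⟨fun {T} u v huv => ?_⟩
  obtain ⟨w, hw, hwu⟩ := huniv (f ≫ u) (by rw [← Category.assoc, hab, Category.assoc])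
  rw [hwu u rfl, hwu v huv.symm]

theorem isRegEpi_of_section {X Y : 𝒞} (f : X ⟶ Y) (s : Y ⟶ X) (hs : s ≫ f = 𝟙 Y) :
    IsRegEpi f := by
  refine ⟨X, 𝟙 X, f ≫ s, by rw [Category.id_comp, Category.assoc, hs, Category.comp_id], ?_⟩
  intro T h hh
  rw [Category.id_comp, Category.assoc] at hh
  refine ⟨s ≫ h, hh.symm, ?_⟩
  intro y hy
  rw [← hy, ← Category.assoc, hs, Category.id_comp]

/-- Regular epi composed with iso is regular epi. -/
theorem isRegEpi_comp_iso {X Y Z : 𝒞} {q : X ⟶ Y} {m : Y ⟶ Z} (hq : IsRegEpi q)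
    (hm : IsIso m) : IsRegEpi (q ≫ m) := by
  obtain ⟨W, a, b, hab, huniv⟩ := hq
  refine ⟨W, a, b, by rw [← Category.assoc, ← Category.assoc, hab], ?_⟩
  intro T h hh
  obtain ⟨u, hu, huu⟩ := huniv h hh
  refine ⟨inv m ≫ u, by simp only [Category.assoc, IsIso.hom_inv_id_assoc]; exact hu, ?_⟩
  intro y hy
  have : q ≫ m ≫ y = h := by rw [← Category.assoc]; exact hy
  have h2 : m ≫ y = u := huu _ this
  rw [← h2, IsIso.inv_hom_id_assoc]

/-- A regular epi is a colimit of any "cone" through a jointly-coequalised pair;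
in particular the regular epi–mono factorisation lemma. -/
theorem factorisation [HasPullbacks 𝒞] (hcoeq : KernelPairsHaveCoequalisers 𝒞)
    (hstab : RegEpisStable 𝒞) {X Y : 𝒞} (h : X ⟶ Y) :
    ∃ (I : 𝒞) (q : X ⟶ I) (m : I ⟶ Y), IsRegEpi q ∧ Mono m ∧ q ≫ m = h ∧
      pullback.fst h h ≫ q = pullback.snd h h ≫ q := by
  obtain ⟨I, q, hab, huniv⟩ :=
    hcoeq h (pullback.fst h h) (pullback.snd h h) (IsPullback.of_hasPullback h h)
  obtain ⟨m, hm, -⟩ := huniv h pullback.condition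
  have hregq : IsRegEpi q := ⟨_, _, _, hab, fun {T} k hk => huniv k hk⟩
  refine ⟨I, q, m, hregq, ?_, hm, hab⟩
  -- mono m
  have hacond : (pullback.fst h h ≫ q) ≫ m = pullback.snd h h ≫ h := by
    rw [Category.assoc, hm]; exact pullback.condition
  let α : pullback h h ⟶ pullback m h :=
    pullback.lift (pullback.fst h h ≫ q) (pullback.snd h h) hacond
  have hbcond : pullback.fst m h ≫ m = (pullback.snd m h ≫ q) ≫ m := by
    rw [Category.assoc, hm]; exact pullback.condition
  let β : pullback m h ⟶ pullback m m :=
    pullback.lift (pullback.fst m h) (pullback.snd m h ≫ q) hbcond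
  have wα : α ≫ pullback.fst m h = pullback.fst h h ≫ q := pullback.lift_fst _ _ _
  have wα2 : α ≫ pullback.snd m h = pullback.snd h h := pullback.lift_snd _ _ _
  have wβ : β ≫ pullback.fst m m = pullback.fst m h := pullback.lift_fst _ _ _
  have wβ2 : β ≫ pullback.snd m m = pullback.snd m h ≫ q := pullback.lift_snd _ _ _
  have hαpb : IsPullback α (pullback.fst h h) (pullback.fst m h) q := by
    refine IsPullback.of_isLimit' ⟨wα⟩ ?_
    refine PullbackCone.IsLimit.mk _ (fun s => pullback.lift s.snd (s.fst ≫ pullback.snd m h)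
      (by calc s.snd ≫ h = s.snd ≫ q ≫ m := by rw [hm]
            _ = (s.fst ≫ pullback.fst m h) ≫ m := by
                  rw [← Category.assoc, ← s.condition]
            _ = (s.fst ≫ pullback.snd m h) ≫ h := by
                  rw [Category.assoc, Category.assoc, pullback.condition])) ?_ ?_ ?_
    · intro s
      apply pullback.hom_ext
      · rw [Category.assoc, wα, ← Category.assoc, pullback.lift_fst, s.condition]
      · rw [Category.assoc, wα2, pullback.lift_snd]
    · intro s; exact pullback.lift_fst _ _ _
    · intro s mm h1 h2
      apply pullback.hom_ext
      · rw [pullback.lift_fst]; exact h2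
      · rw [pullback.lift_snd, ← h1, Category.assoc, wα2]
  have hβpb : IsPullback β (pullback.snd m h) (pullback.snd m m) q := by
    refine IsPullback.of_isLimit' ⟨wβ2⟩ ?_
    refine PullbackCone.IsLimit.mk _ (fun s => pullback.lift (s.fst ≫ pullback.fst m m) s.snd
      (by rw [Category.assoc, pullback.condition, ← Category.assoc, s.condition,
            Category.assoc, hm])) ?_ ?_ ?_
    · intro s
      apply pullback.hom_ext
      · rw [Category.assoc, wβ, pullback.lift_fst]
      · rw [Category.assoc, wβ2, ← Category.assoc, pullback.lift_snd, s.condition]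
    · intro s; exact pullback.lift_snd _ _ _
    · intro s mm h1 h2
      apply pullback.hom_ext
      · rw [pullback.lift_fst, ← h1, Category.assoc, wβ]
      · rw [pullback.lift_snd]; exact h2
  have hαre : IsRegEpi α := hstab _ _ _ _ hαpb hregq
  have hβre : IsRegEpi β := hstab _ _ _ _ hβpb hregq
  have hαe : Epi α := hαre.epi
  have hβe : Epi β := hβre.epi
  have key : pullback.fst m m = pullback.snd m m := by
    have e1 : (α ≫ β) ≫ pullback.fst m m = pullback.fst h h ≫ q := by
      rw [Category.assoc, wβ, wα]
    have e2 : (α ≫ β) ≫ pullback.snd m m = pullback.snd h h ≫ q := by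
      rw [Category.assoc, wβ2, ← Category.assoc, wα2]
    have : (α ≫ β) ≫ pullback.fst m m = (α ≫ β) ≫ pullback.snd m m := by
      rw [e1, e2, hab]
    rw [Category.assoc, Category.assoc] at this
    exact (cancel_epi β).mp ((cancel_epi α).mp this)
  refine ⟨fun {W} x y hxy => ?_⟩
  have : pullback.lift x y hxy ≫ pullback.fst m m = pullback.lift x y hxy ≫ pullback.snd m m := by
    rw [key]
  rw [pullback.lift_fst, pullback.lift_snd] at this
  exact this

/-- `e ≫ m` regular epi and `m` mono implies `m` iso. -/
theorem isIso_of_regEpi_comp_mono {X Y I : 𝒞} {e : X ⟶ I} {m : I ⟶ Y}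
    (hre : IsRegEpi (e ≫ m)) (hm : Mono m) : IsIso m := by
  obtain ⟨Z, a, b, hab, huniv⟩ := hre
  have hab' : a ≫ e = b ≫ e := by
    apply (cancel_mono m).mp
    rw [Category.assoc, Category.assoc]
    rw [← Category.assoc, ← Category.assoc] at hab
    rw [← Category.assoc, ← Category.assoc]
    exact hab
  obtain ⟨u, hu, -⟩ := huniv e hab'
  have hepi : Epi (e ≫ m) := IsRegEpi.epi ⟨Z, a, b, hab, huniv⟩
  have hum : u ≫ m = 𝟙 Y := by
    apply (cancel_epi (e ≫ m)).mp
    rw [← Category.assoc, hu, Category.comp_id]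
  have hmu : m ≫ u = 𝟙 I := by
    apply (cancel_mono m).mp
    rw [Category.assoc, hum, Category.comp_id, Category.id_comp]
  exact ⟨u, hmu, hum⟩

/-- If `φ ≫ ψ` is reg epi then `ψ` is reg epi. -/
theorem isRegEpi_of_comp [HasPullbacks 𝒞] (hcoeq : KernelPairsHaveCoequalisers 𝒞)
    (hstab : RegEpisStable 𝒞) {X Y Z : 𝒞} {φ : X ⟶ Y} {ψ : Y ⟶ Z}
    (hc : IsRegEpi (φ ≫ ψ)) : IsRegEpi ψ := by
  obtain ⟨I, q, m, hq, hm, hqm, -⟩ := factorisation hcoeq hstab ψ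
  have : IsRegEpi ((φ ≫ q) ≫ m) := by rwa [Category.assoc, hqm]
  have him : IsIso m := isIso_of_regEpi_comp_mono this hm
  rw [← hqm]
  exact isRegEpi_comp_iso hq him

/-- Composition of regular epis is a regular epi. -/
theorem isRegEpi_comp [HasPullbacks 𝒞] (hcoeq : KernelPairsHaveCoequalisers 𝒞)
    (hstab : RegEpisStable 𝒞) {X Y Z : 𝒞} {f : X ⟶ Y} {g : Y ⟶ Z}
    (hf : IsRegEpi f) (hg : IsRegEpi g) : IsRegEpi (f ≫ g) := by
  obtain ⟨I, q, m, hq, hm, hqm, hcoeqq⟩ := factorisation hcoeq hstab (f ≫ g)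
  -- kernel pair of f maps into kernel pair of f ≫ g
  have hfcone : pullback.fst f f ≫ f ≫ g = pullback.snd f f ≫ f ≫ g := by
    rw [← Category.assoc, pullback.condition, Category.assoc]
  have hq' : pullback.fst f f ≫ q = pullback.snd f f ≫ q := by
    have hw := pullback.lift_fst (f := f ≫ g) (g := f ≫ g)
      (pullback.fst f f) (pullback.snd f f) hfcone
    have hw2 := pullback.lift_snd (f := f ≫ g) (g := f ≫ g)
      (pullback.fst f f) (pullback.snd f f) hfcone
    calc pullback.fst f f ≫ q
        = (pullback.lift (pullback.fst f f) (pullback.snd f f) hfcone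
            ≫ pullback.fst (f ≫ g) (f ≫ g)) ≫ q := by rw [hw]
      _ = (pullback.lift (pullback.fst f f) (pullback.snd f f) hfcone
            ≫ pullback.snd (f ≫ g) (f ≫ g)) ≫ q := by
            rw [Category.assoc, hcoeqq, ← Category.assoc]
      _ = pullback.snd f f ≫ q := by rw [hw2]
  -- f is the coequaliser of its kernel pair
  have hepi : Epi f := hf.epi
  obtain ⟨W, x, y, hxy, hxyuniv⟩ := hf
  have hxyq : x ≫ q = y ≫ q := by
    have hl := pullback.lift_fst (f := f) (g := f) x y hxy
    have hl2 := pullback.lift_snd (f := f) (g := f) x y hxy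
    calc x ≫ q = (pullback.lift x y hxy ≫ pullback.fst f f) ≫ q := by rw [hl]
      _ = (pullback.lift x y hxy ≫ pullback.snd f f) ≫ q := by
            rw [Category.assoc, hq', ← Category.assoc]
      _ = y ≫ q := by rw [hl2]
  obtain ⟨u, hu, -⟩ := hxyuniv q hxyq
  have hum : u ≫ m = g := by
    have : f ≫ u ≫ m = f ≫ g := by rw [← Category.assoc, hu, hqm]
    exact (cancel_epi f).mp this
  have : IsRegEpi (u ≫ m) := by rwa [hum]
  have him : IsIso m := isIso_of_regEpi_comp_mono this hm
  rw [← hqm]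
  exact isRegEpi_comp_iso hq him


open ZeroObject in
theorem statement8' [HasZeroObject 𝒞] [HasZeroMorphisms 𝒞] [HasFiniteLimits 𝒞]
    (hcoeq : KernelPairsHaveCoequalisers 𝒞) (hstab : RegEpisStable 𝒞) :
    IsSubtractive 𝒞 ↔
      ∀ {A B E D : 𝒞} (f : A ⟶ B) (s : B ⟶ A) (g : E ⟶ D) (t : D ⟶ E)
        (c : E ⟶ A) (d : D ⟶ B), IsSquare1 f s g t c d →
        ∀ {Kg Kf : 𝒞} (kg : Kg ⟶ E) (kf : Kf ⟶ A),
          IsKernelOf kg g → IsKernelOf kf f →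
        ∀ (cbar : Kg ⟶ Kf), cbar ≫ kf = kg ≫ c → IsRegEpi cbar := by
  constructor
  · -- subtractive → every square of type (1) is right saturated
    intro hsub A B E D f s g t c d sq Kg Kf kg kf hkg hkf cbar hcbar
    have hkfmono : Mono kf := by
      refine ⟨fun {W} a b hab => ?_⟩
      have h0 : (b ≫ kf) ≫ f = 0 := by rw [Category.assoc, hkf.1, comp_zero]
      obtain ⟨u, hu, huu⟩ := hkf.2 (b ≫ kf) h0
      rw [huu a hab, huu b rfl]
    set fstQ := pullback.fst c kf with hfstQ
    set sndQ := pullback.snd c kf with hsndQ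
    have hQcond : fstQ ≫ c = sndQ ≫ kf := pullback.condition
    have hzero1 : fstQ ≫ c ≫ f = 0 := by
      rw [← Category.assoc, hQcond, Category.assoc, hkf.1, comp_zero]
    have hkey : fstQ ≫ g ≫ t ≫ c = 0 := by
      calc fstQ ≫ g ≫ t ≫ c = fstQ ≫ g ≫ d ≫ s := by rw [sq.comm2]
        _ = fstQ ≫ (g ≫ d) ≫ s := by simp only [Category.assoc]
        _ = fstQ ≫ (c ≫ f) ≫ s := by rw [sq.comm1]
        _ = (fstQ ≫ c ≫ f) ≫ s := by simp only [Category.assoc]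
        _ = 0 := by rw [hzero1, zero_comp]
    -- S1 : pairs (q, e) with g e = g (fstQ q)
    set a1 := pullback.fst (fstQ ≫ g) g with ha1
    set a2 := pullback.snd (fstQ ≫ g) g with ha2
    have hS1cond : a1 ≫ fstQ ≫ g = a2 ≫ g := pullback.condition
    -- S : triples ((q1, e), q2) with additionally c e = c (fstQ q2)
    set s1 := pullback.fst (a2 ≫ c) (fstQ ≫ c) ≫ a1 with hs1
    set s2 := pullback.snd (a2 ≫ c) (fstQ ≫ c) with hs2
    set eS := pullback.fst (a2 ≫ c) (fstQ ≫ c) ≫ a2 with heS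
    have hScond : eS ≫ c = s2 ≫ fstQ ≫ c := by
      rw [heS, Category.assoc]; exact pullback.condition
    have hSg : eS ≫ g = s1 ≫ fstQ ≫ g := by
      rw [heS, hs1, Category.assoc, Category.assoc, hS1cond]
    set hh := prod.lift s1 s2 with hhh
    obtain ⟨I0, π, m, hπ, hmono, hπm, hcoeqπ⟩ := factorisation hcoeq hstab hh
    have hπ1 : π ≫ m ≫ prod.fst = s1 := by
      rw [← Category.assoc, hπm, hhh, prod.lift_fst]
    have hπ2 : π ≫ m ≫ prod.snd = s2 := by
      rw [← Category.assoc, hπm, hhh, prod.lift_snd]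
    have hjm : ∀ {Z : 𝒞} (a b : Z ⟶ I0), a ≫ (m ≫ prod.fst) = b ≫ (m ≫ prod.fst) →
        a ≫ (m ≫ prod.snd) = b ≫ (m ≫ prod.snd) → a = b := by
      intro Z a b h1 h2
      rw [← Category.assoc, ← Category.assoc] at h1 h2
      exact (cancel_mono m).mp (Limits.prod.hom_ext h1 h2)
    -- reflexivity witness
    have hcondi : 𝟙 (pullback c kf) ≫ fstQ ≫ g = fstQ ≫ g := Category.id_comp _
    set lift1 := pullback.lift (𝟙 _) fstQ hcondi with hlift1
    have hcondr : lift1 ≫ a2 ≫ c = (𝟙 (pullback c kf)) ≫ fstQ ≫ c := by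
      rw [← Category.assoc, hlift1, pullback.lift_snd, Category.id_comp]
    set refS := pullback.lift lift1 (𝟙 _) hcondr with hrefS
    have hrefl1 : (refS ≫ π) ≫ (m ≫ prod.fst) = 𝟙 _ := by
      rw [Category.assoc, hπ1, hs1, ← Category.assoc, hrefS, pullback.lift_fst,
        hlift1, pullback.lift_fst]
    have hrefl2 : (refS ≫ π) ≫ (m ≫ prod.snd) = 𝟙 _ := by
      rw [Category.assoc, hπ2, hs2, hrefS, pullback.lift_snd]
    -- left punctuality witness
    have hcond1 : 𝟙 (pullback c kf) ≫ fstQ ≫ g = (fstQ ≫ g ≫ t) ≫ g := by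
      simp only [Category.id_comp, Category.assoc, sq.sec_g, Category.comp_id]
    set lift2 := pullback.lift (𝟙 _) (fstQ ≫ g ≫ t) hcond1 with hlift2
    have hcond2 : lift2 ≫ a2 ≫ c =
        (0 : pullback c kf ⟶ pullback c kf) ≫ fstQ ≫ c := by
      rw [← Category.assoc, hlift2, pullback.lift_snd, zero_comp]
      simp only [Category.assoc]
      exact hkey
    set lS := pullback.lift lift2 0 hcond2 with hlS
    have hlp1 : (lS ≫ π) ≫ (m ≫ prod.fst) = 𝟙 _ := by
      rw [Category.assoc, hπ1, hs1, ← Category.assoc, hlS, pullback.lift_fst,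
        hlift2, pullback.lift_fst]
    have hlp2 : (lS ≫ π) ≫ (m ≫ prod.snd) = 0 := by
      rw [Category.assoc, hπ2, hs2, hlS, pullback.lift_snd]
    obtain ⟨r, hr1, hr2⟩ := hsub ⟨I0, m ≫ prod.fst, m ≫ prod.snd, hjm⟩
      ⟨refS ≫ π, hrefl1, hrefl2⟩ ⟨lS ≫ π, hlp1, hlp2⟩
    have hr1' : r ≫ m ≫ prod.fst = 0 := hr1
    have hr2' : r ≫ m ≫ prod.snd = 𝟙 _ := hr2
    -- pull back π along r
    set fstW := pullback.fst π r with hfstW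
    set sndW := pullback.snd π r with hsndW
    have hW : fstW ≫ π = sndW ≫ r := pullback.condition
    have hsndWre : IsRegEpi sndW := hstab _ _ _ _ (IsPullback.of_hasPullback π r).flip hπ
    have hfw1 : fstW ≫ s1 = 0 := by
      calc fstW ≫ s1 = fstW ≫ π ≫ m ≫ prod.fst := by rw [hπ1]
        _ = (fstW ≫ π) ≫ m ≫ prod.fst := by simp only [Category.assoc]
        _ = (sndW ≫ r) ≫ m ≫ prod.fst := by rw [hW]
        _ = sndW ≫ r ≫ m ≫ prod.fst := by simp only [Category.assoc]
        _ = sndW ≫ 0 := by rw [hr1']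
        _ = 0 := comp_zero
    have hfw2 : fstW ≫ s2 = sndW := by
      calc fstW ≫ s2 = fstW ≫ π ≫ m ≫ prod.snd := by rw [hπ2]
        _ = (sndW ≫ r) ≫ m ≫ prod.snd := by
              rw [← Category.assoc, hW]
        _ = sndW ≫ r ≫ m ≫ prod.snd := by simp only [Category.assoc]
        _ = sndW := by rw [hr2', Category.comp_id]
    have he'g : (fstW ≫ eS) ≫ g = 0 := by
      rw [Category.assoc, hSg, ← Category.assoc, hfw1, zero_comp]
    have he'c : (fstW ≫ eS) ≫ c = (sndW ≫ sndQ) ≫ kf := by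
      calc (fstW ≫ eS) ≫ c = fstW ≫ eS ≫ c := by rw [Category.assoc]
        _ = fstW ≫ s2 ≫ fstQ ≫ c := by rw [hScond]
        _ = (fstW ≫ s2) ≫ fstQ ≫ c := by simp only [Category.assoc]
        _ = sndW ≫ fstQ ≫ c := by rw [hfw2]
        _ = sndW ≫ sndQ ≫ kf := congrArg (fun z => sndW ≫ z) hQcond
        _ = (sndW ≫ sndQ) ≫ kf := by simp only [Category.assoc]
    obtain ⟨φ', hφ', -⟩ := hkg.2 (fstW ≫ eS) he'g

    have hfinal : φ' ≫ cbar = sndW ≫ sndQ := by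
      apply (cancel_mono kf).mp
      rw [Category.assoc, hcbar, ← Category.assoc, hφ', ← he'c]
    have hsndQre : IsRegEpi sndQ :=
      hstab _ _ _ _ (IsPullback.of_hasPullback c kf).flip sq.regepi_c
    have : IsRegEpi (φ' ≫ cbar) := by
      rw [hfinal]; exact isRegEpi_comp hcoeq hstab hsndWre hsndQre
    exact isRegEpi_of_comp hcoeq hstab this
  · -- right saturation → subtractive
    intro hsat X ρ hrefl hlp
    obtain ⟨rr, hrr1, hrr2⟩ := hrefl
    obtain ⟨l, hl1, hl2⟩ := hlp
    have sq : IsSquare1 (0 : X ⟶ 0) (0 : (0 : 𝒞) ⟶ X) ρ.p1 l ρ.p2 (0 : X ⟶ 0) := by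
      refine ⟨by rw [zero_comp, id_zero], hl1, isRegEpi_of_section ρ.p2 rr hrr2,
        isRegEpi_of_section (0 : X ⟶ 0) (0 : (0 : 𝒞) ⟶ X) (by rw [zero_comp, id_zero]),
        by rw [comp_zero, comp_zero], by rw [comp_zero, hl2]⟩
    have hkg : IsKernelOf (kernel.ι ρ.p1) ρ.p1 := by
      refine ⟨kernel.condition _, fun {Z} mm hmm => ⟨kernel.lift _ mm hmm,
        kernel.lift_ι _ _ _, fun y hy => ?_⟩⟩
      apply (cancel_mono (kernel.ι ρ.p1)).mp
      rw [hy, kernel.lift_ι]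
    have hkf : IsKernelOf (𝟙 X) (0 : X ⟶ 0) := by
      refine ⟨by rw [Category.id_comp], fun {Z} mm hmm => ⟨mm, Category.comp_id mm,
        fun y hy => by rw [← hy, Category.comp_id]⟩⟩
    have hm : IsRegEpi (kernel.ι ρ.p1 ≫ ρ.p2) :=
      hsat (0 : X ⟶ 0) (0 : (0 : 𝒞) ⟶ X) ρ.p1 l ρ.p2 (0 : X ⟶ 0) sq
        (kernel.ι ρ.p1) (𝟙 X) hkg hkf (kernel.ι ρ.p1 ≫ ρ.p2) (Category.comp_id _)
    have hmepi : Epi (kernel.ι ρ.p1 ≫ ρ.p2) := hm.epi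
    obtain ⟨Z, a, b, hab, huniv⟩ := hm
    have hab' : a = b := by
      have h1 : (a ≫ kernel.ι ρ.p1) ≫ ρ.p1 = (b ≫ kernel.ι ρ.p1) ≫ ρ.p1 := by
        rw [Category.assoc, Category.assoc, kernel.condition, comp_zero, comp_zero]
      have h2 : (a ≫ kernel.ι ρ.p1) ≫ ρ.p2 = (b ≫ kernel.ι ρ.p1) ≫ ρ.p2 := by
        rw [Category.assoc, Category.assoc]; exact hab
      exact (cancel_mono (kernel.ι ρ.p1)).mp (ρ.jm _ _ h1 h2)
    obtain ⟨u, hu, -⟩ := huniv (𝟙 _) (by rw [hab'])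
    have hu2 : u ≫ kernel.ι ρ.p1 ≫ ρ.p2 = 𝟙 X := by
      apply (cancel_epi (kernel.ι ρ.p1 ≫ ρ.p2)).mp
      rw [← Category.assoc, hu, Category.id_comp, Category.comp_id]
    refine ⟨u ≫ kernel.ι ρ.p1, ?_, ?_⟩
    · rw [Category.assoc, kernel.condition, comp_zero]
    · rw [Category.assoc]; exact hu2

/-- A pointed regular category is subtractive iff every square of
type (1) is right saturated: the induced morphism `c̄ : Ker(g) → Ker(f)` is a
regular epimorphism. -/
theorem statement8 [HasZeroObject 𝒞] [HasZeroMorphisms 𝒞] [HasFiniteLimits 𝒞]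
    (hcoeq : KernelPairsHaveCoequalisers 𝒞) (hstab : RegEpisStable 𝒞) :
    IsSubtractive 𝒞 ↔
      ∀ {A B E D : 𝒞} (f : A ⟶ B) (s : B ⟶ A) (g : E ⟶ D) (t : D ⟶ E)
        (c : E ⟶ A) (d : D ⟶ B), IsSquare1 f s g t c d →
        ∀ {Kg Kf : 𝒞} (kg : Kg ⟶ E) (kf : Kf ⟶ A),
          IsKernelOf kg g → IsKernelOf kf f →
        ∀ (cbar : Kg ⟶ Kf), cbar ≫ kf = kg ≫ c → IsRegEpi cbar :=
  statement8' hcoeq hstab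

end Paper
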